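/- Let G be an interval graph with maximal cliques C_1,...,C_m linearly ordered so that for each vertex the cliques containing it are consecutive. Let Q be the prevailing subgraph obtained by repeatedly choosing from the current clique the vertex v forgotten last (maximizing the index of the last clique containing v) and adding that last clique's vertices to Q. Then Q has a Hamiltonian path. -/

import Mathlib

/-- A linear coloring: every path in `G` contains a vertex whose color appears
exactly once on the path. -/
def IsLinearColoring {V C : Type*} [DecidableEq C] (G : SimpleGraph V) (ψ : V → C) : Prop :=
  ∀ ⦃u v : V⦄ (p : G.Walk u v), p.IsPath →
    ∃ w ∈ p.support, (p.support.map ψ).count (ψ w) = 1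

/-- A centered coloring: every nonempty vertex set inducing a connected subgraph
contains a vertex whose color appears exactly once in the set. -/
def IsCenteredColoring {V C : Type*} [DecidableEq C] (G : SimpleGraph V) (φ : V → C) : Prop :=
  ∀ S : Finset V, S.Nonempty → (G.induce (S : Set V)).Connected →
    ∃ w ∈ S, (S.filter (fun x => φ x = φ w)).card = 1

/-- The linear coloring number: minimum number of colors of a linear coloring. -/
noncomputable def chiLin {V : Type*} (G : SimpleGraph V) : ℕ :=
  sInf {k | ∃ ψ : V → Fin k, IsLinearColoring G ψ}

/-- The centered coloring number: minimum number of colors of a centered coloring. -/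
noncomputable def chiCen {V : Type*} (G : SimpleGraph V) : ℕ :=
  sInf {k | ∃ φ : V → Fin k, IsCenteredColoring G φ}

/-- A treedepth decomposition of `G`: a rooted forest on the vertices of `G`,
given by its ancestor relation `anc` (a partial order whose down-sets are chains),
such that every edge of `G` joins an ancestor-descendant pair. -/
structure TreedepthDecomp {V : Type*} (G : SimpleGraph V) where
  anc : V → V → Prop
  refl : ∀ v, anc v v
  antisymm : ∀ u v, anc u v → anc v u → u = v
  trans : ∀ u v w, anc u v → anc v w → anc u w
  chain : ∀ u v w, anc u w → anc v w → anc u v ∨ anc v u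
  edge : ∀ u v, G.Adj u v → anc u v ∨ anc v u

/-- The decomposition has depth at most `k`: every ancestor-descendant chain has
at most `k` vertices. -/
def TreedepthDecomp.depthLE {V : Type*} {G : SimpleGraph V} (d : TreedepthDecomp G)
    (k : ℕ) : Prop :=
  ∀ s : Finset V, (∀ a ∈ s, ∀ b ∈ s, d.anc a b ∨ d.anc b a) → s.card ≤ k

/-- The treedepth of `G`: minimum depth of a treedepth decomposition. -/
noncomputable def treedepth {V : Type*} (G : SimpleGraph V) : ℕ :=
  sInf {k | ∃ d : TreedepthDecomp G, d.depthLE k}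

lemma walk_of_chain {W : Type*} (G' : SimpleGraph W) :
    ∀ (L : List W) (a : W), List.Chain G'.Adj a L →
      ∃ (y : W) (q : G'.Walk a y), q.support = a :: L := by
  intro L
  induction L with
  | nil => exact fun a _ => ⟨a, SimpleGraph.Walk.nil, rfl⟩
  | cons b rest ih =>
    intro a h
    replace h : G'.Adj a b ∧ List.Chain G'.Adj b rest := List.isChain_cons_cons.mp h
    obtain ⟨y, q, hq⟩ := ih b h.2
    exact ⟨y, SimpleGraph.Walk.cons h.1 q, by simp [hq]⟩

lemma chain'_aux {V : Type*} [DecidableEq V] (Q : Finset V) (key : V → ℕ) (R : V → V → Prop)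
    (hR : ∀ u v, u ∈ Q → v ∈ Q → u ≠ v → key u ≤ key v →
      (∀ x ∈ Q, x ≠ u → x ≠ v → key x ≤ key u ∨ key v ≤ key x) → R u v) :
    ∀ L : List V, L.Pairwise (fun a b => key a ≤ key b) → L.Nodup →
      (∀ x ∈ L, x ∈ Q) → (∀ x ∈ Q, x ∉ L → ∀ y ∈ L, key x ≤ key y) →
      L.Chain' R := by
  intro L
  induction L with
  | nil => intro _ _ _ _; exact List.isChain_nil
  | cons u rest ih =>
    intro hsort hnd hsub hout
    match rest, hsort, hnd, hsub, hout, ih with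
    | [], _, _, _, _, _ => exact List.isChain_singleton u
    | v :: rest, hsort, hnd, hsub, hout, ih =>
      obtain ⟨huv, hsort'⟩ := List.pairwise_cons.mp hsort
      obtain ⟨hvr, hsort''⟩ := List.pairwise_cons.mp hsort'
      show List.IsChain R (u :: v :: rest)
      rw [List.isChain_cons_cons]
      refine ⟨?_, ?_⟩
      · apply hR u v (hsub u (by simp)) (hsub v (by simp))
        · intro h; exact (List.nodup_cons.mp hnd).1 (h ▸ List.mem_cons_self (a := v) (l := rest))
        · exact huv v (by simp)
        · intro x hxQ hxu hxv
          by_cases hxL : x ∈ u :: v :: rest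
          · rcases List.mem_cons.mp hxL with h | hxL
            · exact absurd h hxu
            · rcases List.mem_cons.mp hxL with h | hxL
              · exact absurd h hxv
              · exact Or.inr (hvr x hxL)
          · exact Or.inl (hout x hxQ hxL u (by simp))
      · apply ih hsort' (List.nodup_cons.mp hnd).2
          (fun x hx => hsub x (List.mem_cons_of_mem _ hx))
        intro x hxQ hxL y hy
        by_cases hxu : x = u
        · subst hxu; exact huv y hy
        · exact hout x hxQ (by simp [hxu, hxL]) y (List.mem_cons_of_mem _ hy)


/-- in an interval graph with maximal cliques `C 0, …, C m`
linearly ordered so that the cliques containing each vertex are consecutive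
(between its introduction index `intro v` and its forget index `F v`), the
prevailing subgraph `Q` — obtained by repeatedly choosing from the current
clique the vertex `w j` forgotten last and adding the clique `C (F (w j))` to
`Q` — has a Hamiltonian path. -/
theorem prevailing_subgraph_hamiltonianPath {V : Type*} [Fintype V] [DecidableEq V]
    (G : SimpleGraph V) (m : ℕ) (C : Fin (m + 1) → Finset V)
    (intro F : V → Fin (m + 1))
    -- the cliques containing a vertex are exactly the consecutive range
    -- between its introduction and forget indices
    (hconsec : ∀ (v : V) (j : Fin (m + 1)), v ∈ C j ↔ intro v ≤ j ∧ j ≤ F v)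
    -- adjacency holds exactly when two distinct vertices share a clique
    (hadj : ∀ u v : V, G.Adj u v ↔ u ≠ v ∧ ∃ j, u ∈ C j ∧ v ∈ C j)
    -- the greedy sequence of prevailing-path vertices `w 0, …, w p`
    (p : ℕ) (w : Fin (p + 1) → V)
    -- `w 0` is a vertex of the first clique forgotten last
    (hstart : w 0 ∈ C 0 ∧ ∀ u ∈ C 0, F u ≤ F (w 0))
    -- `w (j+1)` is a vertex of `C (F (w j))` forgotten last
    (hstep : ∀ j : Fin p, w j.succ ∈ C (F (w j.castSucc)) ∧
      ∀ u ∈ C (F (w j.castSucc)), F u ≤ F (w j.succ))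
    -- the iteration makes progress through the clique ordering
    (hmono : StrictMono (fun j => F (w j)))
    -- and terminates at the last clique
    (hend : F (w (Fin.last p)) = Fin.last m) :
    -- the prevailing subgraph
    ∀ Q : Finset V, Q = Finset.univ.biUnion (fun j : Fin (p + 1) => C (F (w j))) →
      ∃ (x y : (Q : Set V)) (q : (G.induce (Q : Set V)).Walk x y), q.IsHamiltonian := by
    classical
  intro Q hQ
  have hmemQ : ∀ x : V, x ∈ Q ↔ ∃ j : Fin (p + 1), x ∈ C (F (w j)) := by
    intro x; simp [hQ]
  -- every vertex of Q lies in the clique at its own forget index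
  have hFmem : ∀ x ∈ Q, x ∈ C (F x) := by
    intro x hx
    obtain ⟨j, hj⟩ := (hmemQ x).mp hx
    obtain ⟨h1, h2⟩ := (hconsec x _).mp hj
    exact (hconsec x (F x)).mpr ⟨le_trans h1 h2, le_refl _⟩
  -- each w j is in Q
  have hwC : ∀ j : Fin (p + 1), w j ∈ C (F (w j)) := by
    intro j
    induction j using Fin.cases with
    | zero =>
      obtain ⟨h1, h2⟩ := (hconsec (w 0) 0).mp hstart.1
      exact (hconsec _ _).mpr ⟨le_trans h1 h2, le_refl _⟩
    | succ i =>
      obtain ⟨h1, h2⟩ := (hconsec (w i.succ) _).mp (hstep i).1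
      exact (hconsec _ _).mpr ⟨le_trans h1 h2, le_refl _⟩
  have hwQ : ∀ j : Fin (p + 1), w j ∈ Q := fun j => (hmemQ _).mpr ⟨j, hwC j⟩
  -- lower bound: every vertex of Q is forgotten no earlier than w 0
  have hFw0 : ∀ x ∈ Q, F (w 0) ≤ F x := by
    intro x hx
    obtain ⟨j, hj⟩ := (hmemQ x).mp hx
    exact le_trans (hmono.monotone (Fin.zero_le j)) ((hconsec x _).mp hj).2
  -- the key function for sorting
  set key : V → ℕ := fun v => 2 * (F v : ℕ) + (if ∃ j, w j = v then 0 else 1) with hkey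
  have key_lb : ∀ v, 2 * (F v : ℕ) ≤ key v := fun v => Nat.le_add_right _ _
  have key_ub : ∀ v, key v ≤ 2 * (F v : ℕ) + 1 := by
    intro v; simp only [hkey]; split <;> omega
  have key_w : ∀ j, key (w j) = 2 * (F (w j) : ℕ) := by
    intro j
    have hex : ∃ i, w i = w j := ⟨j, rfl⟩
    simp only [hkey, if_pos hex]
    omega
  -- the crucial adjacency property of key-consecutive vertices
  have hR : ∀ u v, u ∈ Q → v ∈ Q → u ≠ v → key u ≤ key v →
      (∀ x ∈ Q, x ≠ u → x ≠ v → key x ≤ key u ∨ key v ≤ key x) → G.Adj u v := by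
    intro u v hu hv hne hle hbet
    have hkuv : (F u : ℕ) ≤ F v := by
      have := key_lb u; have := key_ub v; omega
    rw [hadj]
    refine ⟨hne, F u, hFmem u hu, ?_⟩
    rw [hconsec]
    refine ⟨?_, by rwa [Fin.le_def]⟩
    -- need intro v ≤ F u
    rcases eq_or_lt_of_le hkuv with heq | hlt
    · have : F u = F v := Fin.ext heq
      rw [this]
      exact ((hconsec v _).mp (hFmem v hv)).1
    · -- find j' with v ∈ C (F (w j')) and F (w j') < F v
      have hmain : ∃ j' : Fin (p + 1), v ∈ C (F (w j')) ∧ (F (w j') : ℕ) < (F v : ℕ) := by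
        by_cases hvw : ∃ i, w i = v
        · obtain ⟨i, rfl⟩ := hvw
          induction i using Fin.cases with
          | zero => exact absurd (hFw0 u hu) (by rw [Fin.le_def]; omega)
          | succ t =>
            refine ⟨t.castSucc, (hstep t).1, ?_⟩
            exact hmono (Fin.castSucc_lt_succ (i := t))
        · obtain ⟨j, hj⟩ := (hmemQ v).mp hv
          refine ⟨j, hj, ?_⟩
          have hjle : F (w j) ≤ F v := ((hconsec v _).mp hj).2
          rcases lt_or_eq_of_le hjle with h | h
          · exact h
          · exfalso
            have hzv : w j ≠ v := fun h' => hvw ⟨j, h'⟩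
            have hkz : key (w j) = 2 * (F v : ℕ) := by rw [key_w, h]
            have hkv : key v = 2 * (F v : ℕ) + 1 := by
              simp only [hkey, if_neg hvw]
            have hzu : w j ≠ u := by
              intro h'
              have := key_ub u
              rw [h'] at hkz
              omega
            rcases hbet (w j) (hwQ j) hzu hzv with h' | h'
            · have := key_ub u; omega
            · omega
      obtain ⟨j', hj', hlt'⟩ := hmain
      have hiv : intro v ≤ F (w j') := ((hconsec v _).mp hj').1
      refine le_trans hiv ?_
      -- show F (w j') ≤ F u
      rw [Fin.le_def]
      by_cases hzu : w j' = u
      · rw [hzu]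
      · have hzv : w j' ≠ v := by
          intro h'; rw [h'] at hlt'; omega
        rcases hbet (w j') (hwQ j') hzu hzv with h' | h'
        · rw [key_w] at h'; have := key_ub u; omega
        · exfalso; rw [key_w] at h'; have := key_lb v; omega
  -- sort Q by key
  have htot : IsTotal V (fun a b => key a ≤ key b) := ⟨fun a b => le_total _ _⟩
  have htrans : IsTrans V (fun a b => key a ≤ key b) := ⟨fun a b c => le_trans⟩
  set L : List V := List.insertionSort (fun a b => key a ≤ key b) Q.toList with hL
  have hperm : List.Perm L Q.toList := List.perm_insertionSort _ _
  have hsorted : L.Pairwise (fun a b => key a ≤ key b) := List.pairwise_insertionSort _ _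
  have hnd : L.Nodup := hperm.nodup_iff.mpr Q.nodup_toList
  have hmemL : ∀ x, x ∈ L ↔ x ∈ Q := by
    intro x; rw [hperm.mem_iff, Finset.mem_toList]
  have hchain : L.Chain' G.Adj :=
    chain'_aux Q key G.Adj hR L hsorted hnd (fun x hx => (hmemL x).mp hx)
      (fun x hxQ hxL => absurd ((hmemL x).mpr hxQ) hxL)
  -- pass to the subtype
  have hsubQ : ∀ x ∈ L, x ∈ (Q : Set V) := fun x hx => (hmemL x).mp hx
  set L' : List ↥(Q : Set V) := List.attachWith L (fun x => x ∈ (Q : Set V)) hsubQ with hL'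
  have hmap : L'.map Subtype.val = L := List.attachWith_map_subtype_val _
  have hchain' : L'.Chain' (G.induce (Q : Set V)).Adj := by
    have hc : List.Chain' G.Adj (L'.map Subtype.val) := hmap ▸ hchain
    have := (List.isChain_map (Subtype.val : ↥(Q : Set V) → V)).mp hc
    exact this.imp (fun a b hab => by
      simpa only [SimpleGraph.comap_adj, Function.Embedding.coe_subtype] using hab)
  have hndL' : L'.Nodup := by
    have := hmap ▸ hnd
    exact this.of_map Subtype.val
  have hmemL' : ∀ a : (Q : Set V), a ∈ L' := by
    intro a
    have ha : a.1 ∈ L := (hmemL a.1).mpr a.2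
    have : a.1 ∈ L'.map Subtype.val := hmap ▸ ha
    obtain ⟨b, hb, hba⟩ := List.mem_map.mp this
    rwa [Subtype.ext hba] at hb
  -- L' is nonempty
  have hne : L' ≠ [] := by
    intro h
    have := hmemL' ⟨w 0, hwQ 0⟩
    rw [h] at this
    exact List.not_mem_nil this
  match L', hchain', hndL', hmemL', hne with
  | [], _, _, _, hne => exact absurd rfl hne
  | a :: tail, hchain', hndL', hmemL', _ =>
    obtain ⟨y, q, hq⟩ := walk_of_chain (G.induce (Q : Set V)) tail a hchain'
    refine ⟨a, y, q, ?_⟩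
    intro v
    rw [hq]
    exact @List.count_eq_one_of_mem _ instBEqOfDecidableEq _ _ _ hndL' (hmemL' v)
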